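/- Let S = {arg(α) : α ∈ ℂ, P₃(α) = 0} be the set of principal arguments of the complex roots of P₃(T) = T⁸ − T⁷ + 2T⁶ − 4T⁵ − 2T⁴ − 12T³ + 18T² − 27T + 81. Then the ℚ-vector subspace of ℝ spanned by S ∪ {π} has dimension at most 4. (Equivalently, the angle rank of the corresponding isogeny class 4.3.ab_c_ae_ac is at most 3, so it is not maximal.) -/

import Mathlib

open Polynomial

noncomputable def P3 : Polynomial ℂ :=
  X ^ 8 - X ^ 7 + 2 * X ^ 6 - 4 * X ^ 5 - 2 * X ^ 4 - 12 * X ^ 3 + 18 * X ^ 2 - 27 * X + 81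

noncomputable def sq7 : ℂ := (Real.sqrt 7 : ℝ) * Complex.I

noncomputable def fpoly : Polynomial ℂ :=
  X ^ 4 + C (-(1 + sq7) / 2) * X ^ 3 + C sq7 * X ^ 2 + C ((3 - 3 * sq7) / 2) * X + C (-9)

noncomputable def gpoly : Polynomial ℂ :=
  X ^ 4 + C (-(1 - sq7) / 2) * X ^ 3 + C (-sq7) * X ^ 2 + C ((3 + 3 * sq7) / 2) * X + C (-9)

lemma sq7_sq : sq7 ^ 2 = -7 := by
  have h7 : ((Real.sqrt 7 : ℝ) : ℂ) ^ 2 = 7 := by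
    rw [← Complex.ofReal_pow, Real.sq_sqrt (by norm_num : (7:ℝ) ≥ 0)]
    norm_num
  simp [sq7, mul_pow, h7, Complex.I_sq]

lemma P3_eval_factor (α : ℂ) : P3.eval α = fpoly.eval α * gpoly.eval α := by
  simp only [P3, fpoly, gpoly, eval_add, eval_sub, eval_mul, eval_pow, eval_X, eval_C,
    eval_ofNat]
  linear_combination ((α * (α ^ 2 - 2 * α + 3)) / 2) ^ 2 * sq7_sq

lemma fpoly_conj (α : ℂ) :
    fpoly.eval ((starRingEnd ℂ) α) = (starRingEnd ℂ) (gpoly.eval α) := by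
  have hs : (starRingEnd ℂ) sq7 = -sq7 := by simp [sq7]
  simp only [fpoly, gpoly, eval_add, eval_mul, eval_pow, eval_X, eval_C]
  simp only [map_add, map_mul, map_pow, map_div₀, map_neg, map_sub, map_ofNat, hs, map_one]
  ring

lemma fpoly_monic : fpoly.Monic := by
  unfold fpoly; monicity!

lemma fpoly_natDegree : fpoly.natDegree = 4 := by
  unfold fpoly; compute_degree!

/-- The `ℚ`-vector subspace of `ℝ` spanned by the principal arguments of the complex roots of
`P₃` together with `π` has dimension at most `4` (i.e., the angle rank of the isogeny class
`4.3.ab_c_ae_ac` is at most `3`, hence not maximal). -/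
theorem P3_angle_rank_le_three :
    Module.rank ℚ
      (Submodule.span ℚ ({x : ℝ | ∃ α : ℂ, P3.eval α = 0 ∧ Complex.arg α = x} ∪ {Real.pi}))
      ≤ 4 := by
  classical
  have hsplits : fpoly.Splits := IsAlgClosed.splits fpoly
  have hcard : Multiset.card fpoly.roots = 4 := by
    rw [splits_iff_card_roots.mp hsplits, fpoly_natDegree]
  have hprod : fpoly.roots.prod = -9 := by
    have h := hsplits.coeff_zero_eq_prod_roots_of_monic fpoly_monic
    rw [fpoly_natDegree] at h
    have h0 : fpoly.coeff 0 = -9 := by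
      rw [coeff_zero_eq_eval_zero]; simp [fpoly]
    rw [h0] at h
    norm_num at h
    exact h.symm
  -- extract the four roots
  obtain ⟨z₁, z₂, z₃, z₄, hroots⟩ : ∃ a b c d, fpoly.roots = {a, b, c, d} := by
    have hpos : 0 < Multiset.card fpoly.roots := by omega
    obtain ⟨a, ha⟩ := Multiset.card_pos_iff_exists_mem.mp hpos
    obtain ⟨t, ht⟩ := Multiset.exists_cons_of_mem ha
    rw [ht, Multiset.card_cons] at hcard
    obtain ⟨b, c, d, rfl⟩ := Multiset.card_eq_three.mp (show Multiset.card t = 3 by omega)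
    exact ⟨a, b, c, d, ht⟩
  have hprod4 : z₁ * z₂ * z₃ * z₄ = -9 := by
    rw [hroots] at hprod
    simpa [mul_assoc] using hprod
  have hne : z₁ ≠ 0 ∧ z₂ ≠ 0 ∧ z₃ ≠ 0 ∧ z₄ ≠ 0 := by
    refine ⟨?_, ?_, ?_, ?_⟩ <;> rintro rfl <;> simp at hprod4
  obtain ⟨hne₁, hne₂, hne₃, hne₄⟩ := hne
  set a₁ := Complex.arg z₁
  set a₂ := Complex.arg z₂
  set a₃ := Complex.arg z₃
  set a₄ := Complex.arg z₄
  set T : Set ℝ := {a₁, a₂, a₃, a₄} with hT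
  set V := Submodule.span ℚ T with hV
  have hmemT : ∀ i ∈ T, i ∈ V := fun i hi => Submodule.subset_span hi
  have ha₁ : a₁ ∈ V := hmemT _ (by simp [hT])
  have ha₂ : a₂ ∈ V := hmemT _ (by simp [hT])
  have ha₃ : a₃ ∈ V := hmemT _ (by simp [hT])
  have ha₄ : a₄ ∈ V := hmemT _ (by simp [hT])
  -- π ∈ V
  have hangle : ((Real.pi : ℝ) : Real.Angle) = ((a₁ + a₂ + a₃ + a₄ : ℝ) : Real.Angle) := by
    have h1 : Complex.arg (z₁ * z₂ * z₃ * z₄) = Real.pi := by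
      rw [hprod4]
      have : (-9 : ℂ) = ((-9 : ℝ) : ℂ) := by norm_num
      rw [this, Complex.arg_ofReal_of_neg (by norm_num)]
    calc ((Real.pi : ℝ) : Real.Angle)
        = (Complex.arg (z₁ * z₂ * z₃ * z₄) : Real.Angle) := by rw [h1]
      _ = ((a₁ + a₂ + a₃ + a₄ : ℝ) : Real.Angle) := by
          rw [Complex.arg_mul_coe_angle (by simp [mul_ne_zero, hne₁, hne₂, hne₃]) hne₄,
            Complex.arg_mul_coe_angle (mul_ne_zero hne₁ hne₂) hne₃,
            Complex.arg_mul_coe_angle hne₁ hne₂]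
          rw [Real.Angle.coe_add, Real.Angle.coe_add, Real.Angle.coe_add]
  have hπ : Real.pi ∈ V := by
    obtain ⟨k, hk⟩ := Real.Angle.angle_eq_iff_two_pi_dvd_sub.mp hangle
    have hkne : ((1 - 2 * k : ℚ)) ≠ 0 := by
      intro h
      have : (1 : ℚ) = 2 * k := by linarith
      have := this
      exact absurd (by exact_mod_cast this : (1:ℤ) = 2 * k) (by omega)
    have hsum : a₁ + a₂ + a₃ + a₄ ∈ V := by
      exact add_mem (add_mem (add_mem ha₁ ha₂) ha₃) ha₄
    have heq : Real.pi = ((1 - 2 * k : ℚ))⁻¹ • (a₁ + a₂ + a₃ + a₄) := by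
      have h2 : a₁ + a₂ + a₃ + a₄ = (1 - 2 * (k:ℝ)) * Real.pi := by linarith
      rw [Rat.smul_def, h2]
      have hkneR : (1 - 2 * (k:ℝ)) ≠ 0 := by
        intro h
        apply hkne
        have : ((1 - 2 * k : ℚ) : ℝ) = 0 := by push_cast; linarith
        exact_mod_cast this
      have : ((1 - 2 * k : ℚ))⁻¹ = ((1 - 2 * (k:ℝ)))⁻¹ := by push_cast; norm_num
      rw [this]
      field_simp
    rw [heq]
    exact Submodule.smul_mem _ _ hsum
  -- roots of fpoly have arg in V
  have hfne : fpoly ≠ 0 := fpoly_monic.ne_zero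
  have hargroot : ∀ β : ℂ, fpoly.eval β = 0 → Complex.arg β ∈ V := by
    intro β hβ
    have : β ∈ fpoly.roots := by
      rw [mem_roots hfne]; exact hβ
    rw [hroots] at this
    simp only [Multiset.insert_eq_cons, Multiset.mem_cons, Multiset.mem_singleton] at this
    rcases this with rfl | rfl | rfl | rfl
    · exact ha₁
    · exact ha₂
    · exact ha₃
    · exact ha₄
  -- main inclusion
  refine le_trans ?_ (le_trans (rank_span_le (R := ℚ) T) ?_)
  · apply Submodule.rank_mono
    apply Submodule.span_le.mpr
    rintro x (⟨α, hα, rfl⟩ | rfl)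
    · have hfg := P3_eval_factor α
      rw [hα] at hfg
      rcases mul_eq_zero.mp hfg.symm with hf | hg
      · exact hargroot α hf
      · have hconj : fpoly.eval ((starRingEnd ℂ) α) = 0 := by
          rw [fpoly_conj, hg, map_zero]
        have hconjarg := hargroot _ hconj
        rw [Complex.arg_conj] at hconjarg
        by_cases hcase : Complex.arg α = Real.pi
        · rw [hcase]; exact hπ
        · rw [if_neg hcase] at hconjarg
          simpa using neg_mem hconjarg
    · exact hπ
  · have : T ⊆ {a₁, a₂, a₃, a₄} := le_refl _
    calc (Cardinal.mk T)
        ≤ (Cardinal.mk ({a₂, a₃, a₄} : Set ℝ)) + 1 := by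
          rw [hT]; exact Cardinal.mk_insert_le
      _ ≤ ((Cardinal.mk ({a₃, a₄} : Set ℝ)) + 1) + 1 := by
          gcongr; exact Cardinal.mk_insert_le
      _ ≤ (((Cardinal.mk ({a₄} : Set ℝ)) + 1) + 1) + 1 := by
          gcongr; exact Cardinal.mk_insert_le
      _ = 4 := by rw [Cardinal.mk_singleton]; norm_num
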